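/- Let d ≥ 1 be an integer, j ∈ ℕ₀ and 0 < p_i ≤ u_i < ∞ for i = 1, 2, with p1 < p2 and p1/u1 < p2/u2. Then for every λ ∈ ℂ^{2^{jd}}: ‖λ|m^{2^{jd}}_{u2,p2}‖ ≤ 2^{jd(1/u2 − p1/(p2·u1))} · (max_{m: Q_{j,m} ⊂ Q} |λ_{j,m}|)^{1 − p1/p2} · ‖λ|m^{2^{jd}}_{u1,p1}‖^{p1/p2}. -/

import Mathlib

open scoped ENNReal NNReal

noncomputable section

/-- `Q_{j,m} ⊆ Q = [0,1)^d` iff `0 ≤ m i < 2^j` for every coordinate `i`. -/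
def inUnitCube (d j : ℕ) (m : Fin d → ℤ) : Prop :=
  ∀ i, 0 ≤ m i ∧ m i < 2 ^ j

/-- For `ν ≤ j`: `Q_{j,m} ⊆ Q_{ν,k}`. -/
def cubeSub (d j ν : ℕ) (m k : Fin d → ℤ) : Prop :=
  ∀ i, k i * 2 ^ (j - ν) ≤ m i ∧ m i < (k i + 1) * 2 ^ (j - ν)

/-- The finite-dimensional Morrey quasi-norm `‖· | m^{2^{jd}}_{u,p}‖` (`ℝ≥0∞`-valued),
on coefficients indexed by the `m ∈ ℤ^d` with `Q_{j,m} ⊆ Q` (other coordinates are ignored). -/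
def mNorm (d : ℕ) (u p : ℝ) (j : ℕ) (lam : (Fin d → ℤ) → ℂ) : ℝ≥0∞ :=
  ⨆ νk : {νk : ℕ × (Fin d → ℤ) // νk.1 ≤ j ∧ inUnitCube d νk.1 νk.2},
    (2 : ℝ≥0∞) ^ ((d : ℝ) * ((j : ℝ) - (νk.1.1 : ℝ)) * (1 / u - 1 / p)) *
      (∑' m : {m : Fin d → ℤ // cubeSub d j νk.1.1 m νk.1.2},
        ((‖lam m.1‖₊ : ℝ≥0∞)) ^ p) ^ (1 / p)

/-- The `ℓ_q^{2^{jd}}` quasi-norm (`0 < q < ∞`) on level-`j` coefficients. -/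
def lqNorm (d : ℕ) (q : ℝ) (j : ℕ) (lam : (Fin d → ℤ) → ℂ) : ℝ≥0∞ :=
  (∑' m : {m : Fin d → ℤ // inUnitCube d j m}, ((‖lam m.1‖₊ : ℝ≥0∞)) ^ q) ^ (1 / q)

/-- The quasi-norm of the sequence space `ñ^σ_{u,p,q}(Q)`, `q ∈ (0,∞]`. -/
def nNorm (d : ℕ) (σ u p : ℝ) (q : ℝ≥0∞) (lam : ℕ → (Fin d → ℤ) → ℂ) : ℝ≥0∞ :=
  if q = ∞ then
    ⨆ j : ℕ, (2 : ℝ≥0∞) ^ ((j : ℝ) * (σ - d / u)) * mNorm d u p j (lam j)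
  else
    (∑' j : ℕ, ((2 : ℝ≥0∞) ^ ((j : ℝ) * (σ - d / u)) * mNorm d u p j (lam j)) ^ q.toReal) ^
      (1 / q.toReal)

/-- `k`-th entropy number of the identity map between two quasi-norms on one ambient group:
the infimum of all `ε > 0` such that the `N₁`-unit ball is covered by `2^(k-1)` `N₂`-balls of
radius `ε`. -/
def entropyNumber {Λ : Type*} [AddCommGroup Λ] (N₁ N₂ : Λ → ℝ≥0∞) (k : ℕ) : ℝ≥0∞ :=
  sInf {ε : ℝ≥0∞ | 0 < ε ∧ ∃ c : Fin (2 ^ (k - 1)) → Λ,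
    ∀ x : Λ, N₁ x ≤ 1 → ∃ i, N₂ (x - c i) ≤ ε}

/-- Operator quasi-norm of the identity map between two quasi-norms on one ambient space:
the smallest `C` with `N₂ x ≤ C · N₁ x` for all `x`. -/
def opNorm {Λ : Type*} (N₁ N₂ : Λ → ℝ≥0∞) : ℝ≥0∞ :=
  sInf {C : ℝ≥0∞ | ∀ x, N₂ x ≤ C * N₁ x}

end

theorem stmt14 (d : ℕ) (hd : 1 ≤ d) (j : ℕ) (u1 p1 u2 p2 : ℝ)
    (hp1 : 0 < p1) (hp1u1 : p1 ≤ u1) (hp2 : 0 < p2) (hp2u2 : p2 ≤ u2)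
    (h1 : p1 < p2) (h2 : p1 / u1 < p2 / u2) (lam : (Fin d → ℤ) → ℂ) :
    mNorm d u2 p2 j lam ≤
      (2 : ℝ≥0∞) ^ (((j : ℝ) * d) * (1 / u2 - p1 / (p2 * u1))) *
        (⨆ m : {m : Fin d → ℤ // inUnitCube d j m}, (‖lam m.1‖₊ : ℝ≥0∞)) ^ (1 - p1 / p2) *
        (mNorm d u1 p1 j lam) ^ (p1 / p2) := by
  have hu1 : (0:ℝ) < u1 := lt_of_lt_of_le hp1 hp1u1
  have hu2 : (0:ℝ) < u2 := lt_of_lt_of_le hp2 hp2u2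
  set M := ⨆ m : {m : Fin d → ℤ // inUnitCube d j m}, (‖lam m.1‖₊ : ℝ≥0∞) with hM
  set N1 := mNorm d u1 p1 j lam with hN1
  rw [mNorm]
  apply iSup_le
  rintro ⟨⟨ν, k⟩, hν, hk⟩
  dsimp only
  have hνj' : ν ≤ j := hν
  set a : {m : Fin d → ℤ // cubeSub d j ν m k} → ℝ≥0∞ := fun m => (‖lam m.1‖₊ : ℝ≥0∞) with ha
  have hsub : ∀ m : {m : Fin d → ℤ // cubeSub d j ν m k}, inUnitCube d j m.1 := by
    rintro ⟨m, hm⟩ i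
    obtain ⟨hm1, hm2⟩ := hm i
    obtain ⟨hk1, hk2⟩ := (hk : inUnitCube d ν k) i
    have hk2' : k i < 2 ^ ν := hk2
    refine ⟨le_trans (mul_nonneg hk1 (by positivity)) hm1, ?_⟩
    calc m i < (k i + 1) * 2 ^ (j - ν) := hm2
      _ ≤ 2 ^ ν * 2 ^ (j - ν) := by
          apply mul_le_mul_of_nonneg_right _ (by positivity)
          omega
      _ = 2 ^ j := by rw [← pow_add]; congr 1; omega
  have haM : ∀ m, a m ≤ M := fun m =>
    le_iSup (fun m : {m : Fin d → ℤ // inUnitCube d j m} => (‖lam m.1‖₊ : ℝ≥0∞)) ⟨m.1, hsub m⟩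
  have hpt : ∀ m, a m ^ p2 ≤ M ^ (p2 - p1) * a m ^ p1 := by
    intro m
    rcases eq_or_ne (a m) 0 with h0 | h0
    · rw [h0, ENNReal.zero_rpow_of_pos hp2]; exact zero_le
    · have heq : a m ^ p2 = a m ^ (p2 - p1) * a m ^ p1 := by
        rw [← ENNReal.rpow_add _ _ h0 ENNReal.coe_ne_top]; ring_nf
      rw [heq]
      exact mul_le_mul_left (ENNReal.rpow_le_rpow (haM m) (by linarith)) _
  set S1 := ∑' m : {m : Fin d → ℤ // cubeSub d j ν m k}, a m ^ p1 with hS1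
  have hsum : (∑' m : {m : Fin d → ℤ // cubeSub d j ν m k}, a m ^ p2) ≤ M ^ (p2 - p1) * S1 := by
    rw [hS1, ← ENNReal.tsum_mul_left]
    exact ENNReal.tsum_le_tsum hpt
  set E1 : ℝ := (d : ℝ) * ((j : ℝ) - (ν : ℝ)) * (1 / u1 - 1 / p1) with hE1
  set E2 : ℝ := (d : ℝ) * ((j : ℝ) - (ν : ℝ)) * (1 / u2 - 1 / p2) with hE2
  have hNbound : (2 : ℝ≥0∞) ^ E1 * S1 ^ (1 / p1) ≤ N1 :=
    le_iSup (fun νk : {νk : ℕ × (Fin d → ℤ) // νk.1 ≤ j ∧ inUnitCube d νk.1 νk.2} =>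
      (2 : ℝ≥0∞) ^ ((d : ℝ) * ((j : ℝ) - (νk.1.1 : ℝ)) * (1 / u1 - 1 / p1)) *
        (∑' m : {m : Fin d → ℤ // cubeSub d j νk.1.1 m νk.1.2},
          ((‖lam m.1‖₊ : ℝ≥0∞)) ^ p1) ^ (1 / p1)) ⟨⟨ν, k⟩, hν, hk⟩
  have h2ne : (2 : ℝ≥0∞) ≠ 0 := two_ne_zero
  have h2nt : (2 : ℝ≥0∞) ≠ ⊤ := ENNReal.ofNat_ne_top
  have hSle : S1 ^ (1 / p1) ≤ (2 : ℝ≥0∞) ^ (-E1) * N1 := by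
    calc S1 ^ (1 / p1) = (2 : ℝ≥0∞) ^ (-E1) * ((2 : ℝ≥0∞) ^ E1 * S1 ^ (1 / p1)) := by
          rw [← mul_assoc, ← ENNReal.rpow_add _ _ h2ne h2nt]
          simp
      _ ≤ (2 : ℝ≥0∞) ^ (-E1) * N1 := mul_le_mul_right hNbound _
  calc (2 : ℝ≥0∞) ^ E2 * (∑' m : {m : Fin d → ℤ // cubeSub d j ν m k}, a m ^ p2) ^ (1 / p2)
      ≤ (2 : ℝ≥0∞) ^ E2 * (M ^ (p2 - p1) * S1) ^ (1 / p2) :=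
        mul_le_mul_right (ENNReal.rpow_le_rpow hsum (by positivity)) _
    _ = (2 : ℝ≥0∞) ^ E2 * (M ^ (1 - p1 / p2) * (S1 ^ (1 / p1)) ^ (p1 / p2)) := by
        have e1 : (p2 - p1) * (1 / p2) = 1 - p1 / p2 := by field_simp
        have e2 : (1 / p1) * (p1 / p2) = 1 / p2 := by field_simp
        rw [ENNReal.mul_rpow_of_nonneg _ _ (by positivity : (0:ℝ) ≤ 1 / p2),
          ← ENNReal.rpow_mul, ← ENNReal.rpow_mul, e1, e2]
    _ ≤ (2 : ℝ≥0∞) ^ E2 * (M ^ (1 - p1 / p2) * ((2 : ℝ≥0∞) ^ (-E1) * N1) ^ (p1 / p2)) :=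
        mul_le_mul_right (mul_le_mul_right (ENNReal.rpow_le_rpow hSle (by positivity)) _) _
    _ = (2 : ℝ≥0∞) ^ (E2 - E1 * (p1 / p2)) * M ^ (1 - p1 / p2) * N1 ^ (p1 / p2) := by
        have h2s : (2:ℝ≥0∞) ^ (E2 - E1 * (p1 / p2)) = 2 ^ E2 * 2 ^ (-E1 * (p1 / p2)) := by
          rw [← ENNReal.rpow_add _ _ h2ne h2nt]; ring_nf
        rw [ENNReal.mul_rpow_of_nonneg _ _ (by positivity : (0:ℝ) ≤ p1 / p2),
          ← ENNReal.rpow_mul, h2s]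
        ring
    _ ≤ (2 : ℝ≥0∞) ^ (((j : ℝ) * d) * (1 / u2 - p1 / (p2 * u1))) * M ^ (1 - p1 / p2) *
          N1 ^ (p1 / p2) := by
        gcongr
        · exact one_le_two
        · have hc : (0:ℝ) ≤ 1 / u2 - p1 / (p2 * u1) := by
            have hlt : p1 / (p2 * u1) < 1 / u2 := by
              rw [div_lt_div_iff₀ (by positivity) hu2]
              rw [div_lt_div_iff₀ hu1 hu2] at h2
              nlinarith
            linarith
          have key : E2 - E1 * (p1 / p2) =
              ((d : ℝ) * ((j : ℝ) - ν)) * (1 / u2 - p1 / (p2 * u1)) := by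
            rw [hE1, hE2]; field_simp; ring
          rw [key]
          have hνj : (ν : ℝ) ≤ j := Nat.cast_le.mpr hν
          have hd0 : (0:ℝ) ≤ d := Nat.cast_nonneg d
          have : (d : ℝ) * ((j : ℝ) - ν) ≤ (j : ℝ) * d := by nlinarith
          exact mul_le_mul_of_nonneg_right this hc |>.trans_eq rfl
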